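/- Every edge of the Coxeter graph Γ is contained in exactly four of the 7-cycles of Γ. -/

import Mathlib

/-- Vertex set of the Coxeter graph: four concentric 7-tuples `u, v, t, z`. -/
abbrev CoxeterVertex := Fin 4 × ZMod 7

/-- Base (asymmetric) adjacency relation for the Coxeter graph:
`u_x ~ u_{x+1}`, `v_x ~ v_{x+2}`, `t_x ~ t_{x+3}`, and `z_x ~ u_x, v_x, t_x`. -/
def coxeterRel : CoxeterVertex → CoxeterVertex → Prop := fun p q =>
  (p.1 = 0 ∧ q.1 = 0 ∧ q.2 = p.2 + 1) ∨
  (p.1 = 1 ∧ q.1 = 1 ∧ q.2 = p.2 + 2) ∨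
  (p.1 = 2 ∧ q.1 = 2 ∧ q.2 = p.2 + 3) ∨
  (p.1 = 3 ∧ (q.1 = 0 ∨ q.1 = 1 ∨ q.1 = 2) ∧ q.2 = p.2)

/-- The Coxeter graph on 28 vertices. -/
def coxeterGraph : SimpleGraph CoxeterVertex := SimpleGraph.fromRel coxeterRel

/-- A 7-cycle of a graph `G` is a subgraph of `G` isomorphic to the cycle graph
on 7 vertices. -/
def IsSevenCycle {V : Type*} {G : SimpleGraph V} (H : G.Subgraph) : Prop :=
  Nonempty (H.coe ≃g SimpleGraph.cycleGraph 7)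

open SimpleGraph

/-! ### Auxiliary facts about `cycleGraph 7` -/

lemma cyc7_succ : ∀ i : Fin 7, (cycleGraph 7).Adj i (i+1) := by decide
lemma cyc7_char : ∀ i j : Fin 7, (cycleGraph 7).Adj i j ↔ (j = i + 1 ∨ i = j + 1) := by decide
lemma cyc7_add : ∀ a i j : Fin 7,
    (cycleGraph 7).Adj (a + i) (a + j) ↔ (cycleGraph 7).Adj i j := by decide
lemma cyc7_sub : ∀ a i j : Fin 7,
    (cycleGraph 7).Adj (a - i) (a - j) ↔ (cycleGraph 7).Adj i j := by decide

/-! ### The cycle subgraph associated to a 7-tuple of vertices -/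

/-- The cycle subgraph determined by a 7-tuple of vertices. -/
def cycSub (x : Fin 7 → CoxeterVertex) : coxeterGraph.Subgraph where
  verts := Set.range x
  Adj a b := coxeterGraph.Adj a b ∧
    ∃ i : Fin 7, (a = x i ∧ b = x (i+1)) ∨ (a = x (i+1) ∧ b = x i)
  adj_sub h := h.1
  edge_vert := by rintro a b ⟨-, i, (⟨rfl, -⟩|⟨rfl, -⟩)⟩ <;> exact Set.mem_range_self _
  symm := ⟨by rintro a b ⟨h, i, (⟨h1, h2⟩|⟨h1, h2⟩)⟩
              exacts [⟨h.symm, i, Or.inr ⟨h2, h1⟩⟩, ⟨h.symm, i, Or.inl ⟨h2, h1⟩⟩]⟩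

lemma cycSub_adj_iff (x : Fin 7 → CoxeterVertex) (hinj : Function.Injective x)
    (hadj : ∀ i, coxeterGraph.Adj (x i) (x (i+1))) (i j : Fin 7) :
    (cycSub x).Adj (x i) (x j) ↔ (cycleGraph 7).Adj i j := by
  rw [cyc7_char]
  constructor
  · rintro ⟨-, k, (⟨h1, h2⟩|⟨h1, h2⟩)⟩
    · obtain rfl := hinj h1; exact Or.inl (hinj h2)
    · obtain rfl := hinj h1; exact Or.inr (by rw [hinj h2])
  · rintro (rfl | rfl)
    · exact ⟨hadj i, i, Or.inl ⟨rfl, rfl⟩⟩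
    · exact ⟨(hadj j).symm, j, Or.inr ⟨rfl, rfl⟩⟩

lemma isSevenCycle_cycSub (x : Fin 7 → CoxeterVertex) (hinj : Function.Injective x)
    (hadj : ∀ i, coxeterGraph.Adj (x i) (x (i+1))) : IsSevenCycle (cycSub x) := by
  have hbij : Function.Bijective
      (fun i : Fin 7 => (⟨x i, Set.mem_range_self i⟩ : (cycSub x).verts)) := by
    constructor
    · intro i j h
      exact hinj (congrArg Subtype.val h)
    · rintro ⟨a, i, rfl⟩
      exact ⟨i, rfl⟩
  refine ⟨(⟨Equiv.ofBijective _ hbij, ?_⟩ : cycleGraph 7 ≃g (cycSub x).coe).symm⟩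
  intro i j
  exact cycSub_adj_iff x hinj hadj i j

/-! ### Every 7-cycle subgraph through an edge comes from a tuple -/

lemma classify (H : coxeterGraph.Subgraph) (hH : IsSevenCycle H) {u v : CoxeterVertex}
    (huv : H.Adj u v) :
    ∃ x : Fin 7 → CoxeterVertex, x 0 = u ∧ x 1 = v ∧ Function.Injective x ∧
      (∀ i, coxeterGraph.Adj (x i) (x (i+1))) ∧ H = cycSub x := by
  obtain ⟨φ⟩ := hH
  have hu : u ∈ H.verts := H.edge_vert huv
  have hv : v ∈ H.verts := H.edge_vert huv.symm
  have hab : (cycleGraph 7).Adj (φ ⟨u, hu⟩) (φ ⟨v, hv⟩) := φ.map_adj_iff.mpr huv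
  obtain ⟨ψ, hψadj, hψ0, hψ1⟩ : ∃ ψ : Fin 7 ≃ Fin 7,
      (∀ i j, (cycleGraph 7).Adj (ψ i) (ψ j) ↔ (cycleGraph 7).Adj i j) ∧
      ψ 0 = φ ⟨u, hu⟩ ∧ ψ 1 = φ ⟨v, hv⟩ := by
    rcases (cyc7_char _ _).mp hab with h | h
    · exact ⟨Equiv.addLeft _, fun i j => cyc7_add _ i j, add_zero _, h.symm⟩
    · refine ⟨Equiv.subLeft _, fun i j => cyc7_sub _ i j, sub_zero _, ?_⟩
      rw [h]; exact add_sub_cancel_right (G := Fin 7) (φ ⟨v, hv⟩) 1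
  set x : Fin 7 → CoxeterVertex := fun i => ((φ.symm (ψ i)) : CoxeterVertex) with hxdef
  have key : ∀ i j, H.Adj (x i) (x j) ↔ (cycleGraph 7).Adj i j := by
    intro i j
    rw [← hψadj i j]
    exact Iso.map_adj_iff φ.symm
  have hxval : ∀ w (hw : w ∈ H.verts), x (ψ.symm (φ ⟨w, hw⟩)) = w := by
    intro w hw
    show ((φ.symm (ψ (ψ.symm (φ ⟨w, hw⟩)))) : CoxeterVertex) = w
    rw [ψ.apply_symm_apply, φ.symm_apply_apply]
  have x0 : x 0 = u := by
    show ((φ.symm (ψ 0)) : CoxeterVertex) = u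
    rw [hψ0, φ.symm_apply_apply]
  have x1 : x 1 = v := by
    show ((φ.symm (ψ 1)) : CoxeterVertex) = v
    rw [hψ1, φ.symm_apply_apply]
  have hinj : Function.Injective x := by
    intro i j h
    exact ψ.injective (φ.toEquiv.symm.injective (Subtype.ext h))
  have hadjG : ∀ i, coxeterGraph.Adj (x i) (x (i+1)) :=
    fun i => H.adj_sub ((key i (i+1)).mpr (cyc7_succ i))
  refine ⟨x, x0, x1, hinj, hadjG, Subgraph.ext ?_ ?_⟩
  · ext w
    constructor
    · intro hw
      exact ⟨ψ.symm (φ ⟨w, hw⟩), hxval w hw⟩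
    · rintro ⟨i, rfl⟩
      exact (φ.symm (ψ i)).2
  · ext a b
    constructor
    · intro h
      have ha := H.edge_vert h
      have hb := H.edge_vert h.symm
      rw [← hxval a ha, ← hxval b hb] at h ⊢
      exact (cycSub_adj_iff x hinj hadjG _ _).mpr ((key _ _).mp h)
    · rintro ⟨hG, i, (⟨rfl, rfl⟩|⟨rfl, rfl⟩)⟩
      · exact (key _ _).mpr (cyc7_succ i)
      · exact ((key _ _).mpr (cyc7_succ i)).symm

/-! ### The tuple is determined by the subgraph together with the first two vertices -/

lemma cycSub_nbr (x : Fin 7 → CoxeterVertex) (hinj : Function.Injective x) (i : Fin 7)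
    (c : CoxeterVertex) (h : (cycSub x).Adj (x i) c) : c = x (i+1) ∨ c = x (i-1) := by
  obtain ⟨-, k, (⟨h1, h2⟩|⟨h1, h2⟩)⟩ := h
  · obtain rfl := hinj h1; exact Or.inl h2
  · obtain rfl := hinj h1
    right; rw [h2]; congr 1; exact (add_sub_cancel_right k 1).symm

lemma step' (x y : Fin 7 → CoxeterVertex) (hx : Function.Injective x)
    (hy : Function.Injective y) (h : cycSub x = cycSub y)
    (hyadj : ∀ i, coxeterGraph.Adj (y i) (y (i+1))) (i j k : Fin 7)
    (hj : j = i + 1) (hk : k = j + 1) (e1 : y i = x i) (e2 : y j = x j) : y k = x k := by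
  subst hj hk
  have hAdj : (cycSub y).Adj (y (i+1)) (y (i+1+1)) := ⟨hyadj (i+1), i+1, Or.inl ⟨rfl, rfl⟩⟩
  rw [← h, e2] at hAdj
  rcases cycSub_nbr x hx (i+1) _ hAdj with h' | h'
  · exact h'
  · exfalso
    rw [add_sub_cancel_right, ← e1] at h'
    exact (by decide : ∀ j : Fin 7, j + 1 + 1 ≠ j) i (hy h')

lemma tuple_eq (x y : Fin 7 → CoxeterVertex) (hx : Function.Injective x)
    (hy : Function.Injective y) (h : cycSub x = cycSub y)
    (hyadj : ∀ i, coxeterGraph.Adj (y i) (y (i+1)))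
    (e0 : y 0 = x 0) (e1 : y 1 = x 1) : y = x := by
  have e2 := step' x y hx hy h hyadj 0 1 2 (by decide) (by decide) e0 e1
  have e3 := step' x y hx hy h hyadj 1 2 3 (by decide) (by decide) e1 e2
  have e4 := step' x y hx hy h hyadj 2 3 4 (by decide) (by decide) e2 e3
  have e5 := step' x y hx hy h hyadj 3 4 5 (by decide) (by decide) e3 e4
  have e6 := step' x y hx hy h hyadj 4 5 6 (by decide) (by decide) e4 e5
  funext i
  fin_cases i <;> assumption

/-! ### Enumeration -/

instance : DecidableEq CoxeterVertex := inferInstance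
instance : DecidableRel coxeterRel := fun p q => by unfold coxeterRel; infer_instance
instance : DecidableRel coxeterGraph.Adj := fun p q => by
  unfold coxeterGraph; rw [SimpleGraph.fromRel_adj]; infer_instance

def nbrs (a : CoxeterVertex) : Finset CoxeterVertex :=
  Finset.univ.filter (coxeterGraph.Adj a)

abbrev T5 := CoxeterVertex × CoxeterVertex × CoxeterVertex × CoxeterVertex × CoxeterVertex

def cand (u v : CoxeterVertex) : Finset T5 :=
  (nbrs v).biUnion fun a => (nbrs a).biUnion fun b => (nbrs b).biUnion fun c =>
    (nbrs c).biUnion fun d => ((nbrs d).filter (fun e =>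
      coxeterGraph.Adj e u ∧ ([u, v, a, b, c, d, e] : List CoxeterVertex).Nodup)).image
      (fun e => (a, b, c, d, e))

lemma mem_cand_iff (u v : CoxeterVertex) (a b c d e : CoxeterVertex) :
    (a, b, c, d, e) ∈ cand u v ↔
      coxeterGraph.Adj v a ∧ coxeterGraph.Adj a b ∧ coxeterGraph.Adj b c ∧
      coxeterGraph.Adj c d ∧ coxeterGraph.Adj d e ∧ coxeterGraph.Adj e u ∧
      ([u, v, a, b, c, d, e] : List CoxeterVertex).Nodup := by
  simp only [cand, nbrs, Finset.mem_biUnion, Finset.mem_image, Finset.mem_filter,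
    Finset.mem_univ, true_and, Prod.mk.injEq]
  constructor
  · rintro ⟨a', ha, b', hb, c', hc, d', hd, ⟨e', ⟨he, h1, h2⟩, rfl, rfl, rfl, rfl, rfl⟩⟩
    exact ⟨ha, hb, hc, hd, he, h1, h2⟩
  · rintro ⟨ha, hb, hc, hd, he, h1, h2⟩
    exact ⟨a, ha, b, hb, c, hc, d, hd, e, ⟨he, h1, h2⟩, rfl, rfl, rfl, rfl, rfl⟩

def TT (u v : CoxeterVertex) : Set (Fin 7 → CoxeterVertex) :=
  {x | x 0 = u ∧ x 1 = v ∧ Function.Injective x ∧ ∀ i, coxeterGraph.Adj (x i) (x (i+1))}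

lemma ofFn_eq (x : Fin 7 → CoxeterVertex) :
    List.ofFn x = [x 0, x 1, x 2, x 3, x 4, x 5, x 6] := by
  simp [List.ofFn_succ]

lemma image_TT (u v : CoxeterVertex) (huv : coxeterGraph.Adj u v) :
    (fun x : Fin 7 → CoxeterVertex => (x 2, x 3, x 4, x 5, x 6)) '' TT u v = ↑(cand u v) := by
  ext ⟨a, b, c, d, e⟩
  simp only [Set.mem_image, Finset.mem_coe, mem_cand_iff]
  constructor
  · rintro ⟨x, ⟨h0, h1, hinj, hadj⟩, hx⟩
    obtain ⟨ha, hb, hc, hd, he⟩ : x 2 = a ∧ x 3 = b ∧ x 4 = c ∧ x 5 = d ∧ x 6 = e := by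
      simpa [Prod.ext_iff] using hx
    have key : ∀ (i j : Fin 7), j = i + 1 → coxeterGraph.Adj (x i) (x j) := by
      rintro i _ rfl; exact hadj i
    refine ⟨?_, ?_, ?_, ?_, ?_, ?_, ?_⟩
    · rw [← h1, ← ha]; exact key 1 2 (by decide)
    · rw [← ha, ← hb]; exact key 2 3 (by decide)
    · rw [← hb, ← hc]; exact key 3 4 (by decide)
    · rw [← hc, ← hd]; exact key 4 5 (by decide)
    · rw [← hd, ← he]; exact key 5 6 (by decide)
    · rw [← he, ← h0]; exact key 6 0 (by decide)
    · rw [← h0, ← h1, ← ha, ← hb, ← hc, ← hd, ← he, ← ofFn_eq, List.nodup_ofFn]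
      exact hinj
  · rintro ⟨ha, hb, hc, hd, he, h1, h2⟩
    have hofn : List.ofFn (![u, v, a, b, c, d, e] : Fin 7 → CoxeterVertex)
        = [u, v, a, b, c, d, e] := by simp [List.ofFn_succ]
    have hinj : Function.Injective (![u, v, a, b, c, d, e] : Fin 7 → CoxeterVertex) :=
      List.nodup_ofFn.mp (by rw [hofn]; exact h2)
    refine ⟨![u, v, a, b, c, d, e], ⟨rfl, rfl, hinj, ?_⟩, rfl⟩
    intro i
    fin_cases i
    exacts [huv, ha, hb, hc, hd, he, h1]

set_option maxHeartbeats 16000000 in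
lemma card_cand : ∀ u v, coxeterGraph.Adj u v → (cand u v).card = 4 := by decide

/-- Every edge of the Coxeter graph lies in exactly four of its 7-cycles. -/
theorem coxeterGraph_edge_in_exactly_four_sevenCycles
    (u v : CoxeterVertex) (huv : coxeterGraph.Adj u v) :
    {H : coxeterGraph.Subgraph | IsSevenCycle H ∧ H.Adj u v}.ncard = 4 := by
  have hset : {H : coxeterGraph.Subgraph | IsSevenCycle H ∧ H.Adj u v} = cycSub '' TT u v := by
    ext H
    constructor
    · rintro ⟨hH, hadj⟩
      obtain ⟨x, h0, h1, hinj, hadjx, rfl⟩ := classify H hH hadj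
      exact ⟨x, ⟨h0, h1, hinj, hadjx⟩, rfl⟩
    · rintro ⟨x, ⟨h0, h1, hinj, hadjx⟩, rfl⟩
      refine ⟨isSevenCycle_cycSub x hinj hadjx, ⟨huv, 0, Or.inl ⟨h0.symm, ?_⟩⟩⟩
      rw [(by decide : (0 : Fin 7) + 1 = 1), h1]
  have hinjOn : Set.InjOn cycSub (TT u v) := by
    intro x hx y hy h
    exact (tuple_eq x y hx.2.2.1 hy.2.2.1 h hy.2.2.2
      (hy.1.trans hx.1.symm) (hy.2.1.trans hx.2.1.symm)).symm
  have hgInj : Set.InjOn (fun x : Fin 7 → CoxeterVertex => (x 2, x 3, x 4, x 5, x 6))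
      (TT u v) := by
    intro x hx y hy h
    obtain ⟨e2, e3, e4, e5, e6⟩ : x 2 = y 2 ∧ x 3 = y 3 ∧ x 4 = y 4 ∧ x 5 = y 5 ∧ x 6 = y 6 := by
      simpa [Prod.ext_iff] using h
    funext i
    fin_cases i
    exacts [hx.1.trans hy.1.symm, hx.2.1.trans hy.2.1.symm, e2, e3, e4, e5, e6]
  rw [hset, Set.ncard_image_of_injOn hinjOn, ← Set.ncard_image_of_injOn hgInj,
    image_TT u v huv, Set.ncard_coe_finset, card_cand u v huv]
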